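/- Let α, λ, μ be rational numbers, let s assign a rational number s_I to each 4-element subset I of {1,…,7}, and let p_1,…,p_7 be rationals. If (s,p) is F-nef with parameters (α,λ,μ), then for every 2-element subset {i,j} of {1,…,7}: 6·c_{ij} + (4α + 9λ − 5μ)(p_i + p_j) + (2α + 9λ − 5μ)·∑_{k∉{i,j}} p_k ≥ 0, where c_{ij} = (1/3)·∑_{I ⊇ {i,j}} s_I + (α+λ)(p_i + p_j) + λ·∑_{k∉{i,j}} p_k (the sum over I ranging over 4-element subsets of {1,…,7}). -/
import Mathlib


open Finset

/-- `(s, p)` is F-nef with parameters `(a, l, m)` (`α`, `λ`, `μ`): the value of the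
divisor `D = ∑ s_I S_I + ∑ p_i P_i` on every F-curve of `M̄_{0,7}` is nonnegative,
for the three combinatorial types `(1:1:1:4)`, `(1:1:2:3)`, `(1:2:2:2)` of partitions
`(A,B,C,D)` of the marked points. -/
def FNef (a l m : ℚ) (s : Finset (Fin 7) → ℚ) (p : Fin 7 → ℚ) : Prop :=
  ∀ A B C D : Finset (Fin 7),
    Disjoint A B → Disjoint A C → Disjoint A D →
    Disjoint B C → Disjoint B D → Disjoint C D →
    A ∪ B ∪ C ∪ D = univ →
    A.Nonempty → B.Nonempty → C.Nonempty → D.Nonempty →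
    ((A.card = 1 ∧ B.card = 1 ∧ C.card = 1 ∧ D.card = 4 →
        0 ≤ (∑ I ∈ univ.filter (fun I : Finset (Fin 7) => I.card = 4 ∧
                (I ∩ A).card = 1 ∧ (I ∩ B).card = 1 ∧ (I ∩ C).card = 1 ∧ (I ∩ D).card = 1),
              s I)
            + (2*a + 3*l - m) * (∑ i ∈ A ∪ B ∪ C, p i)
            + (3*l - m) * (∑ j ∈ D, p j)) ∧
     (A.card = 1 ∧ B.card = 1 ∧ C.card = 2 ∧ D.card = 3 →
        0 ≤ (∑ I ∈ univ.filter (fun I : Finset (Fin 7) => I.card = 4 ∧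
                (I ∩ A).card = 1 ∧ (I ∩ B).card = 1 ∧ (I ∩ C).card = 1 ∧ (I ∩ D).card = 1),
              s I)
            + (a + m) * (∑ i ∈ A ∪ B, p i)
            + (-a + m) * (∑ j ∈ C, p j)
            + m * (∑ k ∈ D, p k)) ∧
     (A.card = 1 ∧ B.card = 2 ∧ C.card = 2 ∧ D.card = 2 →
        0 ≤ (∑ I ∈ univ.filter (fun I : Finset (Fin 7) => I.card = 4 ∧
                (I ∩ A).card = 1 ∧ (I ∩ B).card = 1 ∧ (I ∩ C).card = 1 ∧ (I ∩ D).card = 1),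
              s I)
            + 3*(m - l) * (∑ i ∈ A, p i)
            + (-a + 3*(m - l)) * (∑ j ∈ B ∪ C ∪ D, p j)))

/-- The coefficient `c_J` of the boundary divisor `Δ_J` in the obvious representative of
`D = ∑ s_I S_I + ∑ p_i P_i`, for `J` of cardinality 2 or 3. -/
def cJ (a l m : ℚ) (s : Finset (Fin 7) → ℚ) (p : Fin 7 → ℚ) (J : Finset (Fin 7)) : ℚ :=
  if J.card = 2 then
    (1/3) * (∑ I ∈ univ.filter (fun I : Finset (Fin 7) => I.card = 4 ∧ J ⊆ I), s I)
      + (a + l) * (∑ i ∈ J, p i) + l * (∑ k ∈ Jᶜ, p k)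
  else
    (1/3) * (∑ I ∈ univ.filter (fun I : Finset (Fin 7) => I.card = 4 ∧ (I ∩ J).card = 2), s I)
      + m * (∑ k, p k)


lemma inter_singleton_card' (s : Finset (Fin 7)) (x : Fin 7) :
    (s ∩ {x}).card = 1 ↔ x ∈ s := by
  by_cases h : x ∈ s
  · simp [Finset.inter_singleton_of_mem h, h]
  · simp [Finset.inter_singleton_of_notMem h, h]

lemma double_sum' (s : Finset (Fin 7) → ℚ) (i j : Fin 7) (hij : i ≠ j) :
    ∑ k ∈ ({i,j}ᶜ : Finset (Fin 7)),
      ∑ I ∈ univ.filter (fun I : Finset (Fin 7) => I.card = 4 ∧ i ∈ I ∧ j ∈ I ∧ k ∈ I), s I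
    = 2 * ∑ I ∈ univ.filter (fun I : Finset (Fin 7) => I.card = 4 ∧ ({i,j} : Finset (Fin 7)) ⊆ I), s I := by
  simp only [sum_filter]
  rw [Finset.sum_comm, Finset.mul_sum]
  apply Finset.sum_congr rfl
  intro I _
  by_cases hQ : I.card = 4 ∧ i ∈ I ∧ j ∈ I
  · obtain ⟨h4, hi, hj⟩ := hQ
    have h1 : ∑ k ∈ ({i,j}ᶜ : Finset (Fin 7)),
        (if I.card = 4 ∧ i ∈ I ∧ j ∈ I ∧ k ∈ I then s I else 0)
        = ∑ k ∈ ({i,j}ᶜ : Finset (Fin 7)), (if k ∈ I then s I else 0) := by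
      apply Finset.sum_congr rfl; intro k _
      simp [h4, hi, hj]
    rw [h1, Finset.sum_ite_mem, Finset.sum_const]
    have h2 : ({i,j}ᶜ : Finset (Fin 7)) ∩ I = I \ {i,j} := by
      ext x; simp [and_comm, and_assoc]
    have hsub : ({i,j} : Finset (Fin 7)) ⊆ I := by simp [insert_subset_iff, hi, hj]
    have h5 : (({i,j}ᶜ : Finset (Fin 7)) ∩ I).card = 2 := by
      rw [h2, card_sdiff_of_subset hsub, h4,
        card_insert_of_notMem (by simp [hij]), card_singleton]
    rw [h5, if_pos ⟨h4, hsub⟩]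
    ring
  · have h1 : ∑ k ∈ ({i,j}ᶜ : Finset (Fin 7)),
        (if I.card = 4 ∧ i ∈ I ∧ j ∈ I ∧ k ∈ I then s I else 0) = 0 := by
      apply Finset.sum_eq_zero; intro k _
      exact if_neg (fun h => hQ ⟨h.1, h.2.1, h.2.2.1⟩)
    rw [h1, if_neg, mul_zero]
    intro h
    exact hQ ⟨h.1, h.2 (by simp), h.2 (by simp)⟩

lemma fkey (a l m : ℚ) (s : Finset (Fin 7) → ℚ) (p : Fin 7 → ℚ)
    (hF : FNef a l m s p) (i j : Fin 7) (hij : i ≠ j) (k : Fin 7)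
    (hki : k ≠ i) (hkj : k ≠ j) :
    0 ≤ (∑ I ∈ univ.filter (fun I : Finset (Fin 7) => I.card = 4 ∧ i ∈ I ∧ j ∈ I ∧ k ∈ I), s I)
            + (2*a + 3*l - m) * (p i + p j + p k)
            + (3*l - m) * ((∑ d ∈ ({i,j}ᶜ : Finset (Fin 7)), p d) - p k) := by
  have h3 : ({i, j, k} : Finset (Fin 7)).card = 3 := by
    rw [card_insert_of_notMem (by simp [hij, hki.symm]),
        card_insert_of_notMem (by simp [hkj.symm]), card_singleton]
  have hD4 : (({i,j,k}ᶜ : Finset (Fin 7))).card = 4 := by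
    rw [card_compl, h3]; rfl
  have hDne : (({i,j,k}ᶜ : Finset (Fin 7))).Nonempty := by
    rw [← card_pos, hD4]; norm_num
  have H := ((hF {i} {j} {k} ({i,j,k}ᶜ)
      (by simp [Finset.disjoint_singleton, hij, hij.symm])
      (by simp [Finset.disjoint_singleton, hki, hki.symm])
      (by simp [disjoint_compl_right_iff, Finset.le_iff_subset, singleton_subset_iff])
      (by simp [Finset.disjoint_singleton, hkj, hkj.symm])
      (by simp [disjoint_compl_right_iff, Finset.le_iff_subset, singleton_subset_iff])
      (by simp [disjoint_compl_right_iff, Finset.le_iff_subset, singleton_subset_iff])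
      (by rw [show ({i} ∪ {j} ∪ {k} : Finset (Fin 7)) = {i,j,k} from by ext x; simp [or_assoc]]
          exact union_compl {i,j,k})
      (singleton_nonempty i) (singleton_nonempty j) (singleton_nonempty k) hDne).1
    ⟨card_singleton i, card_singleton j, card_singleton k, hD4⟩)
  have hfilter : univ.filter (fun I : Finset (Fin 7) => I.card = 4 ∧
      (I ∩ {i}).card = 1 ∧ (I ∩ {j}).card = 1 ∧ (I ∩ {k}).card = 1 ∧
      (I ∩ ({i,j,k}ᶜ : Finset (Fin 7))).card = 1)
      = univ.filter (fun I : Finset (Fin 7) => I.card = 4 ∧ i ∈ I ∧ j ∈ I ∧ k ∈ I) := by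
    apply filter_congr
    intro I _
    simp only [inter_singleton_card']
    constructor
    · rintro ⟨h4, hi, hj, hk, -⟩; exact ⟨h4, hi, hj, hk⟩
    · rintro ⟨h4, hi, hj, hk⟩
      refine ⟨h4, hi, hj, hk, ?_⟩
      have hsub : ({i,j,k} : Finset (Fin 7)) ⊆ I := by
        simp [insert_subset_iff, hi, hj, hk]
      have : I ∩ ({i,j,k}ᶜ : Finset (Fin 7)) = I \ {i,j,k} := by
        ext x; simp [and_comm]
      rw [this, card_sdiff_of_subset hsub, h4, h3]
  have hunion : ({i} ∪ {j} ∪ {k} : Finset (Fin 7)) = {i, j, k} := by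
    ext x; simp [or_assoc]
  have hsum3 : (∑ x ∈ ({i,j,k} : Finset (Fin 7)), p x) = p i + p j + p k := by
    rw [Finset.sum_insert (by simp [hij, hki.symm]),
        Finset.sum_insert (by simp [hkj.symm]), Finset.sum_singleton, add_assoc]
  have hcompl : ({i,j,k}ᶜ : Finset (Fin 7)) = ({i,j}ᶜ : Finset (Fin 7)).erase k := by
    ext x; simp [not_or, and_comm, and_assoc]
  have hk2 : k ∈ ({i,j}ᶜ : Finset (Fin 7)) := by simp [hki, hkj]
  have hsumD : (∑ d ∈ ({i,j,k}ᶜ : Finset (Fin 7)), p d)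
      = (∑ d ∈ ({i,j}ᶜ : Finset (Fin 7)), p d) - p k := by
    rw [hcompl, Finset.sum_erase_eq_sub hk2]
  rw [hfilter, hunion, hsum3, hsumD] at H
  exact H

theorem stmt4 (a l m : ℚ) (s : Finset (Fin 7) → ℚ) (p : Fin 7 → ℚ)
    (hF : FNef a l m s p) (i j : Fin 7) (hij : i ≠ j) :
    0 ≤ 6 * cJ a l m s p {i, j}
        + (4*a + 9*l - 5*m) * (p i + p j)
        + (2*a + 9*l - 5*m) * (∑ k ∈ ({i, j}ᶜ : Finset (Fin 7)), p k) := by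
  have hcard2 : ({i,j} : Finset (Fin 7)).card = 2 := by
    rw [card_insert_of_notMem (by simp [hij]), card_singleton]
  have hT5 : (({i,j}ᶜ : Finset (Fin 7))).card = 5 := by
    rw [card_compl, hcard2]; rfl
  set S : ℚ := ∑ k ∈ ({i,j}ᶜ : Finset (Fin 7)), p k with hS
  set G : ℚ := ∑ I ∈ univ.filter
      (fun I : Finset (Fin 7) => I.card = 4 ∧ ({i,j} : Finset (Fin 7)) ⊆ I), s I with hG
  have main : 0 ≤ ∑ k ∈ ({i,j}ᶜ : Finset (Fin 7)),
      ((∑ I ∈ univ.filter (fun I : Finset (Fin 7) => I.card = 4 ∧ i ∈ I ∧ j ∈ I ∧ k ∈ I), s I)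
        + (2*a + 3*l - m) * (p i + p j + p k)
        + (3*l - m) * (S - p k)) := by
    apply Finset.sum_nonneg
    intro k hk
    have hk' : k ≠ i ∧ k ≠ j := by simpa [not_or] using hk
    exact fkey a l m s p hF i j hij k hk'.1 hk'.2
  have expand : ∑ k ∈ ({i,j}ᶜ : Finset (Fin 7)),
      ((∑ I ∈ univ.filter (fun I : Finset (Fin 7) => I.card = 4 ∧ i ∈ I ∧ j ∈ I ∧ k ∈ I), s I)
        + (2*a + 3*l - m) * (p i + p j + p k)
        + (3*l - m) * (S - p k))
      = 2 * G + (2*a + 3*l - m) * (5 * (p i + p j) + S) + (3*l - m) * (4 * S) := by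
    rw [Finset.sum_add_distrib, Finset.sum_add_distrib, double_sum' s i j hij, ← hG]
    have e1 : ∑ k ∈ ({i,j}ᶜ : Finset (Fin 7)), (2*a + 3*l - m) * (p i + p j + p k)
        = (2*a + 3*l - m) * (5 * (p i + p j) + S) := by
      rw [← Finset.mul_sum, Finset.sum_add_distrib, Finset.sum_const, hT5, ← hS]
      ring
    have e2 : ∑ k ∈ ({i,j}ᶜ : Finset (Fin 7)), (3*l - m) * (S - p k)
        = (3*l - m) * (4 * S) := by
      rw [← Finset.mul_sum, Finset.sum_sub_distrib, Finset.sum_const, hT5, ← hS]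
      ring
    rw [e1, e2]
  rw [expand] at main
  have hsum2 : (∑ x ∈ ({i,j} : Finset (Fin 7)), p x) = p i + p j := by
    rw [Finset.sum_insert (by simp [hij]), Finset.sum_singleton]
  rw [cJ, if_pos hcard2, hsum2, ← hS, ← hG]
  linarith
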